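/- Let L be a frame, r_1 < ⋯ < r_k < 0 ≤ r_{k+1} < ⋯ < r_n rationals, and a_1, …, a_n pairwise disjoint complemented elements of L with a_1 ⊔ ⋯ ⊔ a_n = ⊤. Let f := Σ_{i=1}^{n} r_i·χ_{a_i}. Then the positive part f⁺ := f ⊔ 𝟎 equals Σ_{i=k+1}^{n} r_i·χ_{a_i}, and the negative part f⁻ := (−f) ⊔ 𝟎 equals Σ_{i=1}^{k} (−r_i)·χ_{a_i} (componentwise equalities of pairs). In particular the positive and negative parts of a measurable simple function are simple. -/

import Mathlib

/-- A pair of maps `u, v : ℚ → L`, encoding a real-valued function on the frame `L`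
via `f(p,—) = u p`, `f(—,q) = v q`. -/
structure MP (L : Type*) where
  u : ℚ → L
  v : ℚ → L

namespace MP

variable {L : Type*} [Order.Frame L]

/-- The order on pairs: `f ≤ g` iff `u_f p ≤ u_g p` and `v_g q ≤ v_f q` for all rationals. -/
def le (f g : MP L) : Prop :=
  (∀ p : ℚ, f.u p ≤ g.u p) ∧ (∀ q : ℚ, g.v q ≤ f.v q)

/-- The sum of two pairs. -/
noncomputable def add (f g : MP L) : MP L where
  u := fun p => ⨆ t : ℚ, f.u t ⊓ g.u (p - t)
  v := fun q => ⨆ t : ℚ, f.v t ⊓ g.v (q - t)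

/-- The join of two pairs. -/
def sup (f g : MP L) : MP L where
  u := fun p => f.u p ⊔ g.u p
  v := fun q => f.v q ⊓ g.v q

/-- The negation of a pair. -/
def neg (f : MP L) : MP L where
  u := fun p => f.v (-p)
  v := fun q => f.u (-q)

end MP

/-- The zero pair `𝟎`. -/
noncomputable def zeroMP (L : Type*) [Order.Frame L] : MP L where
  u := fun p => if p < 0 then ⊤ else ⊥
  v := fun q => if q ≤ 0 then ⊥ else ⊤

/-- The scaled characteristic pair `r·χ_a`, for a rational `r` and a complemented
element `a` with complement `ac`. -/
noncomputable def sChi {L : Type*} [Order.Frame L] (r : ℚ) (a ac : L) : MP L where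
  u := fun p =>
    if 0 < r then (if p < 0 then ⊤ else if p < r then a else ⊥)
    else if r = 0 then (if p < 0 then ⊤ else ⊥)
    else (if p < r then ⊤ else if p < 0 then ac else ⊥)
  v := fun q =>
    if 0 < r then (if q ≤ 0 then ⊥ else if q ≤ r then ac else ⊤)
    else if r = 0 then (if q ≤ 0 then ⊥ else ⊤)
    else (if q ≤ r then ⊥ else if q ≤ 0 then a else ⊤)

/-- Iterated sum of a finite list of pairs. -/
noncomputable def sumMP {L : Type*} [Order.Frame L] : List (MP L) → MP L
  | [] => zeroMP L
  | [f] => f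
  | f :: g :: fs => f.add (sumMP (g :: fs))

set_option linter.unreachableTactic false
set_option linter.unusedTactic false
set_option linter.unusedSectionVars false

namespace SimpleAux

variable {L : Type*} [Order.Frame L]

open Classical in
noncomputable def selSup (ℓ : List (ℚ × L × L)) (P : ℚ → Prop) : L :=
  (ℓ.map fun x => if P x.1 then x.2.1 else ⊥).foldr (· ⊔ ·) ⊥

open Classical in
noncomputable def selInf (ℓ : List (ℚ × L × L)) (P : ℚ → Prop) : L :=
  (ℓ.map fun x => if P x.1 then x.2.2 else ⊤).foldr (· ⊓ ·) ⊤

@[simp] lemma selSup_nil (P : ℚ → Prop) : selSup ([] : List (ℚ × L × L)) P = ⊥ := rfl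
@[simp] lemma selInf_nil (P : ℚ → Prop) : selInf ([] : List (ℚ × L × L)) P = ⊤ := rfl

open Classical in
@[simp] lemma selSup_cons (x : ℚ × L × L) (ℓ : List (ℚ × L × L)) (P : ℚ → Prop) :
    selSup (x :: ℓ) P = (if P x.1 then x.2.1 else ⊥) ⊔ selSup ℓ P := rfl

open Classical in
@[simp] lemma selInf_cons (x : ℚ × L × L) (ℓ : List (ℚ × L × L)) (P : ℚ → Prop) :
    selInf (x :: ℓ) P = (if P x.1 then x.2.2 else ⊤) ⊓ selInf ℓ P := rfl

lemma selSup_append (ℓ₁ ℓ₂ : List (ℚ × L × L)) (P : ℚ → Prop) :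
    selSup (ℓ₁ ++ ℓ₂) P = selSup ℓ₁ P ⊔ selSup ℓ₂ P := by
  induction ℓ₁ with
  | nil => simp
  | cons x t ih => simp [ih, sup_assoc]

lemma selInf_append (ℓ₁ ℓ₂ : List (ℚ × L × L)) (P : ℚ → Prop) :
    selInf (ℓ₁ ++ ℓ₂) P = selInf ℓ₁ P ⊓ selInf ℓ₂ P := by
  induction ℓ₁ with
  | nil => simp
  | cons x t ih => simp [ih, inf_assoc]

lemma selSup_le {ℓ : List (ℚ × L × L)} {P : ℚ → Prop} {z : L}
    (h : ∀ x ∈ ℓ, P x.1 → x.2.1 ≤ z) : selSup ℓ P ≤ z := by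
  induction ℓ with
  | nil => simp
  | cons x t ih =>
    simp only [selSup_cons]
    refine sup_le ?_ (ih fun y hy => h y (List.mem_cons_of_mem _ hy))
    by_cases hP : P x.1
    · simpa [hP] using h x (List.mem_cons_self) hP
    · simp [hP]

lemma le_selSup {ℓ : List (ℚ × L × L)} {P : ℚ → Prop} {x : ℚ × L × L}
    (hx : x ∈ ℓ) (h : P x.1) : x.2.1 ≤ selSup ℓ P := by
  induction ℓ with
  | nil => simp at hx
  | cons y t ih =>
    rcases List.mem_cons.1 hx with rfl | hx
    · simp [h]
    · exact le_trans (ih hx) (le_sup_right)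

lemma le_selInf {ℓ : List (ℚ × L × L)} {P : ℚ → Prop} {z : L}
    (h : ∀ x ∈ ℓ, P x.1 → z ≤ x.2.2) : z ≤ selInf ℓ P := by
  induction ℓ with
  | nil => simp
  | cons x t ih =>
    simp only [selInf_cons]
    refine le_inf ?_ (ih fun y hy => h y (List.mem_cons_of_mem _ hy))
    by_cases hP : P x.1
    · simpa [hP] using h x (List.mem_cons_self) hP
    · simp [hP]

lemma selInf_le {ℓ : List (ℚ × L × L)} {P : ℚ → Prop} {x : ℚ × L × L}
    (hx : x ∈ ℓ) (h : P x.1) : selInf ℓ P ≤ x.2.2 := by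
  induction ℓ with
  | nil => simp at hx
  | cons y t ih =>
    rcases List.mem_cons.1 hx with rfl | hx
    · simp [h]
    · exact le_trans inf_le_right (ih hx)

lemma selSup_mono {ℓ : List (ℚ × L × L)} {P Q : ℚ → Prop}
    (h : ∀ x ∈ ℓ, P x.1 → Q x.1) : selSup ℓ P ≤ selSup ℓ Q :=
  selSup_le fun x hx hP => le_selSup hx (h x hx hP)

lemma selInf_mono {ℓ : List (ℚ × L × L)} {P Q : ℚ → Prop}
    (h : ∀ x ∈ ℓ, P x.1 → Q x.1) : selInf ℓ Q ≤ selInf ℓ P :=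
  le_selInf fun x hx hP => selInf_le hx (h x hx hP)

lemma selSup_congr {ℓ : List (ℚ × L × L)} {P Q : ℚ → Prop}
    (h : ∀ x ∈ ℓ, (P x.1 ↔ Q x.1)) : selSup ℓ P = selSup ℓ Q :=
  le_antisymm (selSup_mono fun x hx => (h x hx).1) (selSup_mono fun x hx => (h x hx).2)

lemma selInf_congr {ℓ : List (ℚ × L × L)} {P Q : ℚ → Prop}
    (h : ∀ x ∈ ℓ, (P x.1 ↔ Q x.1)) : selInf ℓ P = selInf ℓ Q :=
  le_antisymm (selInf_mono fun x hx => (h x hx).2) (selInf_mono fun x hx => (h x hx).1)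

lemma selSup_bot {ℓ : List (ℚ × L × L)} {P : ℚ → Prop}
    (h : ∀ x ∈ ℓ, ¬ P x.1) : selSup ℓ P = ⊥ :=
  le_bot_iff.1 <| selSup_le fun x hx hP => absurd hP (h x hx)

lemma selInf_top {ℓ : List (ℚ × L × L)} {P : ℚ → Prop}
    (h : ∀ x ∈ ℓ, ¬ P x.1) : selInf ℓ P = ⊤ :=
  top_le_iff.1 <| le_selInf fun x hx hP => absurd hP (h x hx)

lemma inf_selSup_eq_bot {ℓ : List (ℚ × L × L)} {P : ℚ → Prop} {a : L}
    (h : ∀ x ∈ ℓ, a ⊓ x.2.1 = ⊥) : a ⊓ selSup ℓ P = ⊥ := by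
  induction ℓ with
  | nil => simp
  | cons x t ih =>
    have hx := h x (List.mem_cons_self)
    have ht := ih fun y hy => h y (List.mem_cons_of_mem _ hy)
    by_cases hP : P x.1 <;> simp [inf_sup_left, hP, hx, ht]

lemma le_of_disj_isCompl {b bc c : L} (h : b ⊓ c = ⊥) (hi : IsCompl b bc) : c ≤ bc := by
  have : c = (c ⊓ b) ⊔ (c ⊓ bc) := by
    rw [← inf_sup_left, hi.sup_eq_top, inf_top_eq]
  rw [this, inf_comm c b, h]
  simp

end SimpleAux

namespace SimpleAux
variable {L : Type*} [Order.Frame L]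

/-- Pairwise-disjointness relation on triples. -/
def DisjT (x y : ℚ × L × L) : Prop := x.2.1 ⊓ y.2.1 = ⊥

lemma head_le_selInf {ℓ : List (ℚ × L × L)} {a : L} {P : ℚ → Prop}
    (hct : ∀ x ∈ ℓ, IsCompl x.2.1 x.2.2) (hd : ∀ x ∈ ℓ, a ⊓ x.2.1 = ⊥) :
    a ≤ selInf ℓ P :=
  le_selInf fun x hx _ => le_of_disj_isCompl (by rw [inf_comm]; exact hd x hx) (hct x hx)

lemma compl_identity {ℓ : List (ℚ × L × L)} (P : ℚ → Prop)
    (hct : ∀ x ∈ ℓ, IsCompl x.2.1 x.2.2) (hd : ℓ.Pairwise DisjT) :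
    selSup ℓ (fun r => ¬ P r) ⊔ selInf ℓ (fun _ => True) = selInf ℓ P := by
  induction ℓ with
  | nil => simp
  | cons x t ih =>
    rw [List.pairwise_cons] at hd
    have hcx : IsCompl x.2.1 x.2.2 := hct x (List.mem_cons_self)
    have hct' : ∀ y ∈ t, IsCompl y.2.1 y.2.2 := fun y hy => hct y (List.mem_cons_of_mem _ hy)
    have hdx : ∀ y ∈ t, x.2.1 ⊓ y.2.1 = ⊥ := fun y hy => hd.1 y hy
    have ihs := ih hct' hd.2
    have hS : selSup t (fun r => ¬ P r) ≤ x.2.2 :=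
      selSup_le fun y hy _ => le_of_disj_isCompl (hdx y hy) hcx
    have haI : x.2.1 ≤ selInf t (fun _ => True) := head_le_selInf hct' hdx
    by_cases hP : P x.1
    · rw [selSup_cons, selInf_cons, selInf_cons, if_neg (not_not_intro hP), if_pos hP,
        if_pos trivial, bot_sup_eq, ← ihs, inf_sup_left, inf_eq_right.2 hS]
    · rw [selSup_cons, selInf_cons, selInf_cons, if_pos hP, if_neg hP,
        if_pos trivial, top_inf_eq, ← ihs]
      have h1 : x.2.1 ⊔ (x.2.2 ⊓ selInf t fun _ => True) = x.2.1 ⊔ selInf t fun _ => True := by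
        rw [sup_inf_left, hcx.sup_eq_top, top_inf_eq]
      rw [sup_comm x.2.1 (selSup t fun r => ¬ P r), sup_assoc, h1, sup_eq_right.2 haI]

lemma selSup_selInf_top {ℓ : List (ℚ × L × L)}
    (hct : ∀ x ∈ ℓ, IsCompl x.2.1 x.2.2) (hd : ℓ.Pairwise DisjT) :
    selSup ℓ (fun _ => True) ⊔ selInf ℓ (fun _ => True) = ⊤ := by
  have h := compl_identity (fun _ => False) hct hd
  rw [selInf_top (P := fun _ => False) (fun x _ h => h)] at h
  have h2 : selSup ℓ (fun _ => True) = selSup ℓ (fun r => ¬ (fun _ => False) r) :=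
    selSup_congr (fun x _ => by simp)
  rw [h2, h]


lemma selSup_lt_le {ℓ : List (ℚ × L × L)} {p : ℚ} {z : L}
    (h : ∀ s : ℚ, p < s → selSup ℓ (fun r => s < r) ≤ z) :
    selSup ℓ (fun r => p < r) ≤ z := by
  induction ℓ with
  | nil => simp
  | cons x t ih =>
    simp only [selSup_cons]
    refine sup_le ?_ (ih fun s hs => le_trans (by simp [selSup_cons]) (h s hs))
    by_cases hP : p < x.1
    · rw [if_pos hP]
      have hmid : p < (p + x.1) / 2 := by linarith
      have hmid2 : (p + x.1) / 2 < x.1 := by linarith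
      exact le_trans (le_selSup (List.mem_cons_self) hmid2) (h _ hmid)
    · simp [hP]

end SimpleAux
set_option linter.unusedSectionVars false
namespace SimpleAux
variable {L : Type*} [Order.Frame L]

lemma MP.ext' {f g : MP L} (hu : ∀ p, f.u p = g.u p) (hv : ∀ q, f.v q = g.v q) : f = g := by
  cases f; cases g
  simp only [MP.mk.injEq]
  exact ⟨funext hu, funext hv⟩

lemma neg_neg_mp (f : MP L) : f.neg.neg = f :=
  MP.ext' (fun p => by simp [MP.neg]) (fun q => by simp [MP.neg])

lemma neg_add (f g : MP L) : (f.add g).neg = f.neg.add g.neg := by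
  refine MP.ext' (fun p => ?_) (fun q => ?_)
  · show (⨆ t : ℚ, f.v t ⊓ g.v (-p - t)) = ⨆ t : ℚ, f.v (-t) ⊓ g.v (-(p - t))
    rw [← Equiv.iSup_comp (g := fun t => f.v t ⊓ g.v (-p - t)) (Equiv.neg ℚ)]
    refine iSup_congr fun t => ?_
    simp only [Equiv.neg_apply]
    ring_nf
  · show (⨆ t : ℚ, f.u t ⊓ g.u (-q - t)) = ⨆ t : ℚ, f.u (-t) ⊓ g.u (-(q - t))
    rw [← Equiv.iSup_comp (g := fun t => f.u t ⊓ g.u (-q - t)) (Equiv.neg ℚ)]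
    refine iSup_congr fun t => ?_
    simp only [Equiv.neg_apply]
    ring_nf

lemma sChi_neg (r : ℚ) (a ac : L) : (sChi r a ac).neg = sChi (-r) a ac := by
  refine MP.ext' (fun p => ?_) (fun q => ?_)
  · show (sChi r a ac).v (-p) = (sChi (-r) a ac).u p
    rcases lt_trichotomy r 0 with h | h | h
    · simp only [sChi, if_neg (show ¬ (0:ℚ) < r by linarith), if_neg (show r ≠ 0 by linarith),
        if_pos (show (0:ℚ) < -r by linarith)]
      split_ifs <;> first | rfl | (exfalso; linarith)
    · subst h
      simp only [sChi, neg_zero, lt_irrefl, if_neg, if_pos rfl]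
      norm_num
      split_ifs <;> first | rfl | (exfalso; linarith)
    · simp only [sChi, if_pos h, if_neg (show ¬ (0:ℚ) < -r by linarith),
        if_neg (show -r ≠ 0 by intro hc; linarith [neg_eq_zero.1 hc])]
      split_ifs <;> first | rfl | (exfalso; linarith)
  · show (sChi r a ac).u (-q) = (sChi (-r) a ac).v q
    rcases lt_trichotomy r 0 with h | h | h
    · simp only [sChi, if_neg (show ¬ (0:ℚ) < r by linarith), if_neg (show r ≠ 0 by linarith),
        if_pos (show (0:ℚ) < -r by linarith)]
      split_ifs <;> first | rfl | (exfalso; linarith)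
    · subst h
      simp only [sChi, neg_zero, lt_irrefl, if_neg, if_pos rfl]
      norm_num
      split_ifs <;> first | rfl | (exfalso; linarith)
    · simp only [sChi, if_pos h, if_neg (show ¬ (0:ℚ) < -r by linarith),
        if_neg (show -r ≠ 0 by intro hc; linarith [neg_eq_zero.1 hc])]
      split_ifs <;> first | rfl | (exfalso; linarith)

/-- The canonical-shape invariant for sums of scaled characteristic pairs. -/
structure IsSum (ℓ : List (ℚ × L × L)) (f : MP L) : Prop where
  hu : ∀ p, f.u p =
    selSup ℓ (fun t => p < t) ⊔ (if p < 0 then selInf ℓ (fun _ => True) else ⊥)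
  hv : ∀ q, f.v q =
    selSup ℓ (fun t => t < q) ⊔ (if 0 < q then selInf ℓ (fun _ => True) else ⊥)

lemma isSum_zero : IsSum ([] : List (ℚ × L × L)) (zeroMP L) := by
  constructor
  · intro p
    show (if p < 0 then (⊤:L) else ⊥) = ⊥ ⊔ (if p < 0 then ⊤ else ⊥)
    rw [bot_sup_eq]
  · intro q
    show (if q ≤ 0 then (⊥:L) else ⊤) = ⊥ ⊔ (if 0 < q then ⊤ else ⊥)
    rw [bot_sup_eq]
    rcases le_or_gt q 0 with h | h
    · rw [if_pos h, if_neg (not_lt.2 h)]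
    · rw [if_neg (not_le.2 h), if_pos h]

lemma isSum_single {r : ℚ} {a ac : L} (hc : IsCompl a ac) :
    IsSum [(r, a, ac)] (sChi r a ac) := by
  have htop : a ⊔ ac = ⊤ := hc.sup_eq_top
  constructor
  · intro p
    rw [selSup_cons, selSup_nil, selInf_cons, selInf_nil, sup_bot_eq, if_pos trivial,
      inf_top_eq]
    simp only [sChi]
    rcases lt_trichotomy r 0 with h | h | h
    · rw [if_neg (show ¬ (0:ℚ) < r by linarith), if_neg (show r ≠ 0 by linarith)]
      split_ifs <;>
        first
          | rfl
          | (exfalso; linarith)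
          | (rw [← htop])
          | (rw [← htop]; simp [sup_comm])
          | simp
    · subst h
      rw [if_neg (lt_irrefl 0), if_pos rfl]
      split_ifs <;>
        first
          | rfl
          | (exfalso; linarith)
          | (rw [← htop])
          | (rw [← htop]; simp [sup_comm])
          | simp
    · rw [if_pos h]
      split_ifs <;>
        first
          | rfl
          | (exfalso; linarith)
          | (rw [← htop])
          | (rw [← htop]; simp [sup_comm])
          | simp
  · intro q
    rw [selSup_cons, selSup_nil, selInf_cons, selInf_nil, sup_bot_eq, if_pos trivial,
      inf_top_eq]
    simp only [sChi]
    rcases lt_trichotomy r 0 with h | h | h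
    · rw [if_neg (show ¬ (0:ℚ) < r by linarith), if_neg (show r ≠ 0 by linarith)]
      split_ifs <;>
        first
          | rfl
          | (exfalso; linarith)
          | (rw [← htop])
          | (rw [← htop]; simp [sup_comm])
          | simp
    · subst h
      rw [if_neg (lt_irrefl 0), if_pos rfl]
      split_ifs <;>
        first
          | rfl
          | (exfalso; linarith)
          | (rw [← htop])
          | (rw [← htop]; simp [sup_comm])
          | simp
    · rw [if_pos h]
      split_ifs <;>
        first
          | rfl
          | (exfalso; linarith)
          | (rw [← htop])
          | (rw [← htop]; simp [sup_comm])
          | simp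

/-- Negating the rationals in a list of triples. -/
def negL (ℓ : List (ℚ × L × L)) : List (ℚ × L × L) := ℓ.map fun x => (-x.1, x.2)

@[simp] lemma negL_nil : negL ([] : List (ℚ × L × L)) = [] := rfl
@[simp] lemma negL_cons (x : ℚ × L × L) (ℓ : List (ℚ × L × L)) :
    negL (x :: ℓ) = (-x.1, x.2) :: negL ℓ := rfl

@[simp] lemma negL_negL (ℓ : List (ℚ × L × L)) : negL (negL ℓ) = ℓ := by
  induction ℓ with
  | nil => rfl
  | cons x t ih => simp [ih]

lemma selSup_negL (ℓ : List (ℚ × L × L)) (P : ℚ → Prop) :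
    selSup (negL ℓ) P = selSup ℓ (fun t => P (-t)) := by
  induction ℓ with
  | nil => rfl
  | cons x t ih => simp [ih]

lemma selInf_negL (ℓ : List (ℚ × L × L)) (P : ℚ → Prop) :
    selInf (negL ℓ) P = selInf ℓ (fun t => P (-t)) := by
  induction ℓ with
  | nil => rfl
  | cons x t ih => simp [ih]

lemma isSum_neg {ℓ : List (ℚ × L × L)} {f : MP L} (h : IsSum ℓ f) :
    IsSum (negL ℓ) f.neg := by
  constructor
  · intro p
    show f.v (-p) = _
    rw [h.hv, selSup_negL, selInf_negL]
    have e1 : selSup ℓ (fun t => t < -p) = selSup ℓ (fun t => p < -t) :=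
      selSup_congr (fun x _ => by constructor <;> intro <;> linarith)
    have e2 : selInf ℓ (fun _ => True) = selInf ℓ (fun t => True) := rfl
    rw [e1]
    congr 1
    rcases lt_or_ge p 0 with h' | h'
    · rw [if_pos (by linarith : (0:ℚ) < -p), if_pos h']
    · rw [if_neg (by intro hc; linarith : ¬ (0:ℚ) < -p), if_neg (not_lt.2 h')]
  · intro q
    show f.u (-q) = _
    rw [h.hu, selSup_negL, selInf_negL]
    have e1 : selSup ℓ (fun t => -q < t) = selSup ℓ (fun t => -t < q) :=
      selSup_congr (fun x _ => by constructor <;> intro <;> linarith)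
    rw [e1]
    congr 1
    rcases lt_or_ge 0 q with h' | h'
    · rw [if_pos (by linarith : -q < 0), if_pos h']
    · rw [if_neg (by intro hc; linarith : ¬ -q < 0), if_neg (not_lt.2 h')]

end SimpleAux
set_option linter.unreachableTactic false
set_option linter.unusedTactic false
namespace SimpleAux
variable {L : Type*} [Order.Frame L]

lemma isSum_add {ℓ : List (ℚ × L × L)} {g : MP L} {r : ℚ} {a ac : L}
    (hr : 0 ≤ r) (hc : IsCompl a ac)
    (hct : ∀ x ∈ ℓ, IsCompl x.2.1 x.2.2)
    (hd : ∀ x ∈ ℓ, a ⊓ x.2.1 = ⊥)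
    (h : IsSum ℓ g) :
    IsSum ((r, a, ac) :: ℓ) ((sChi r a ac).add g) := by
  have htop : a ⊔ ac = ⊤ := hc.sup_eq_top
  set I := selInf ℓ (fun _ => True) with hI
  have haI : a ≤ I := head_le_selInf hct hd
  have haS : ∀ P : ℚ → Prop, a ⊓ selSup ℓ P = ⊥ := fun P => inf_selSup_eq_bot hd
  -- unified description of the components of `sChi r a ac` for `0 ≤ r`
  have hu0 : ∀ t : ℚ, (sChi r a ac).u t = if t < 0 then ⊤ else if t < r then a else ⊥ := by
    intro t
    simp only [sChi]
    split_ifs <;> first | rfl | (exfalso; linarith)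
  have hv0 : ∀ t : ℚ, (sChi r a ac).v t = if t ≤ 0 then ⊥ else if t ≤ r then ac else ⊤ := by
    intro t
    simp only [sChi]
    split_ifs <;> first | rfl | (exfalso; linarith)
  constructor
  · intro p
    rw [selSup_cons, selInf_cons, if_pos trivial, ← hI]
    show (⨆ t : ℚ, (sChi r a ac).u t ⊓ g.u (p - t)) = _
    apply le_antisymm
    · refine iSup_le fun t => ?_
      rw [hu0 t, h.hu (p - t)]
      rcases lt_or_ge t 0 with h1 | h1
      · rw [if_pos h1, top_inf_eq]
        refine sup_le ?_ ?_
        · refine le_trans (selSup_mono fun x _ hx => lt_trans (by linarith) hx) ?_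
          exact le_trans le_sup_right le_sup_left
        · rcases lt_or_ge (p - t) 0 with h2 | h2
          · rw [if_pos h2]
            have hp0 : p < 0 := by linarith
            rw [if_pos hp0, if_pos (show p < r by linarith)]
            -- I ≤ (a ⊔ S) ⊔ ac ⊓ I
            have : I ≤ a ⊔ ac ⊓ I := by
              rw [sup_inf_left, htop, top_inf_eq]
              exact le_sup_right
            exact le_trans this (sup_le (le_trans le_sup_left le_sup_left) le_sup_right)
          · rw [if_neg (not_lt.2 h2)]
            exact bot_le
      · rw [if_neg (not_lt.2 h1)]
        rcases lt_or_ge t r with h2 | h2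
        · rw [if_pos h2, inf_sup_left, haS]
          rw [bot_sup_eq]
          rcases lt_or_ge (p - t) 0 with h3 | h3
          · rw [if_pos h3, inf_comm, inf_eq_right.2 haI]
            have hpr : p < r := by linarith
            rw [if_pos hpr]
            exact le_trans le_sup_left le_sup_left
          · rw [if_neg (not_lt.2 h3), inf_bot_eq]
            exact bot_le
        · rw [if_neg (not_lt.2 h2), bot_inf_eq]
          exact bot_le
    · refine sup_le (sup_le ?_ ?_) ?_
      · -- the `a` component
        by_cases hpr : p < r
        · rw [if_pos hpr]
          rcases lt_or_ge p 0 with hp | hp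
          · refine le_trans ?_ (le_iSup _ (p/2))
            rw [hu0, if_pos (by linarith : p/2 < (0:ℚ)), top_inf_eq, h.hu,
              if_pos (by linarith : p - p/2 < 0)]
            exact le_trans haI le_sup_right
          · refine le_trans ?_ (le_iSup _ ((p+r)/2))
            rw [hu0, if_neg (by intro hc'; linarith : ¬ (p+r)/2 < 0),
              if_pos (by linarith : (p+r)/2 < r), h.hu,
              if_pos (by linarith : p - (p+r)/2 < 0)]
            exact le_inf le_rfl (le_trans haI le_sup_right)
        · rw [if_neg hpr]; exact bot_le
      · -- the `selSup ℓ (p < ·)` component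
        refine selSup_lt_le fun s hs => ?_
        refine le_trans ?_ (le_iSup _ (p - s))
        rw [hu0, if_pos (by linarith : p - s < 0), top_inf_eq, sub_sub_cancel, h.hu]
        exact le_sup_left
      · -- the `ac ⊓ I` component
        by_cases hp : p < 0
        · rw [if_pos hp]
          refine le_trans ?_ (le_iSup _ (p/2))
          rw [hu0, if_pos (by linarith : p/2 < (0:ℚ)), top_inf_eq, h.hu,
            if_pos (by linarith : p - p/2 < 0)]
          exact le_trans inf_le_right le_sup_right
        · rw [if_neg hp]; exact bot_le
  · intro q
    rw [selSup_cons, selInf_cons, if_pos trivial, ← hI]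
    show (⨆ t : ℚ, (sChi r a ac).v t ⊓ g.v (q - t)) = _
    apply le_antisymm
    · refine iSup_le fun t => ?_
      rw [hv0 t, h.hv (q - t)]
      rcases le_or_gt t 0 with h1 | h1
      · rw [if_pos h1, bot_inf_eq]; exact bot_le
      rcases le_or_gt t r with h2 | h2
      · rw [if_neg (not_le.2 h1), if_pos h2, inf_sup_left]
        refine sup_le ?_ ?_
        · refine le_trans inf_le_right ?_
          refine le_trans (selSup_mono (Q := fun t => t < q) fun x _ hx => show x.1 < q by linarith) ?_
          exact le_trans le_sup_right le_sup_left
        · rcases lt_or_ge 0 (q - t) with h3 | h3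
          · rw [if_pos h3, if_pos (show (0:ℚ) < q by linarith)]
            exact le_sup_right
          · rw [if_neg (not_lt.2 h3), inf_bot_eq]; exact bot_le
      · rw [if_neg (not_le.2 h1), if_neg (not_le.2 h2), top_inf_eq]
        refine sup_le ?_ ?_
        · refine le_trans (selSup_mono (Q := fun t => t < q) fun x _ hx => show x.1 < q by linarith) ?_
          exact le_trans le_sup_right le_sup_left
        · rcases lt_or_ge 0 (q - t) with h3 | h3
          · rw [if_pos h3]
            have hq : 0 < q := by linarith
            have hrq : r < q := by linarith
            rw [if_pos hq, if_pos hrq]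
            -- I ≤ (a ⊔ S) ⊔ ac ⊓ I
            have : I ≤ a ⊔ ac ⊓ I := by
              rw [sup_inf_left, htop, top_inf_eq]
              exact le_sup_right
            exact le_trans this (sup_le (le_trans le_sup_left le_sup_left) le_sup_right)
          · rw [if_neg (not_lt.2 h3)]; exact bot_le
    · refine sup_le (sup_le ?_ ?_) ?_
      · -- the `a` component
        by_cases hrq : r < q
        · rw [if_pos hrq]
          refine le_trans ?_ (le_iSup _ ((r+q)/2))
          rw [hv0, if_neg (by intro hc'; linarith : ¬ (r+q)/2 ≤ 0),
            if_neg (by intro hc'; linarith : ¬ (r+q)/2 ≤ r), top_inf_eq, h.hv,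
            if_pos (by linarith : 0 < q - (r+q)/2)]
          exact le_trans haI le_sup_right
        · rw [if_neg hrq]; exact bot_le
      · -- the `selSup ℓ (· < q)` component
        refine selSup_le fun x hx hxq => ?_
        rcases eq_or_lt_of_le hr with h0 | h0
        · -- r = 0
          refine le_trans ?_ (le_iSup _ (q - (x.1+q)/2))
          rw [hv0, if_neg (by intro hc'; linarith : ¬ q - (x.1+q)/2 ≤ 0),
            if_neg (by intro hc'; linarith : ¬ q - (x.1+q)/2 ≤ r), top_inf_eq,
            sub_sub_cancel, h.hv]
          exact le_trans (le_selSup hx (by linarith)) le_sup_left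
        · -- r > 0
          set s : ℚ := max (q - r) ((x.1 + q)/2) with hs
          have hs1 : s < q := by
            apply max_lt <;> [linarith; linarith]
          have hs2 : q - r ≤ s := le_max_left _ _
          have hs3 : x.1 < s := lt_of_lt_of_le (by linarith) (le_max_right _ _)
          refine le_trans ?_ (le_iSup _ (q - s))
          rw [hv0, if_neg (by intro hc'; linarith : ¬ q - s ≤ 0),
            if_pos (by linarith : q - s ≤ r), sub_sub_cancel, h.hv]
          have hxac : x.2.1 ≤ ac := le_of_disj_isCompl (hd x hx) hc
          exact le_inf hxac (le_trans (le_selSup (P := fun t => t < s) hx hs3) le_sup_left)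
      · -- the `ac ⊓ I` component
        by_cases hq : 0 < q
        · rw [if_pos hq]
          rcases eq_or_lt_of_le hr with h0 | h0
          · -- r = 0
            refine le_trans ?_ (le_iSup _ (q/2))
            rw [hv0, if_neg (by intro hc'; linarith : ¬ q/2 ≤ 0),
              if_neg (by intro hc'; linarith : ¬ q/2 ≤ r), top_inf_eq, h.hv,
              if_pos (by linarith : 0 < q - q/2)]
            exact le_trans inf_le_right le_sup_right
          · -- r > 0
            set t : ℚ := min r q / 2 with ht
            have ht0 : 0 < min r q := lt_min h0 hq
            have ht1 : 0 < t := by positivity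
            have ht2 : t ≤ r := le_trans (by linarith) (min_le_left r q)
            have ht3 : 0 < q - t := by
              have := min_le_right r q
              simp only [ht]
              linarith
            refine le_trans ?_ (le_iSup _ t)
            rw [hv0, if_neg (not_le.2 ht1), if_pos ht2, h.hv, if_pos ht3]
            exact inf_le_inf le_rfl le_sup_right
        · rw [if_neg hq]; exact bot_le

end SimpleAux
namespace SimpleAux
variable {L : Type*} [Order.Frame L]

lemma isSum_add' {ℓ : List (ℚ × L × L)} {g : MP L} {r : ℚ} {a ac : L}
    (hc : IsCompl a ac)
    (hct : ∀ x ∈ ℓ, IsCompl x.2.1 x.2.2)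
    (hd : ∀ x ∈ ℓ, a ⊓ x.2.1 = ⊥)
    (h : IsSum ℓ g) :
    IsSum ((r, a, ac) :: ℓ) ((sChi r a ac).add g) := by
  rcases le_or_gt 0 r with hr | hr
  · exact isSum_add hr hc hct hd h
  · have h1 : IsSum (negL ℓ) g.neg := isSum_neg h
    have hct' : ∀ x ∈ negL ℓ, IsCompl x.2.1 x.2.2 := by
      intro x hx
      rcases List.mem_map.1 hx with ⟨y, hy, rfl⟩
      exact hct y hy
    have hd' : ∀ x ∈ negL ℓ, a ⊓ x.2.1 = ⊥ := by
      intro x hx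
      rcases List.mem_map.1 hx with ⟨y, hy, rfl⟩
      exact hd y hy
    have h2 := isSum_add (le_of_lt (neg_pos.2 hr)) hc hct' hd' h1
    have h3 := isSum_neg h2
    have e1 : negL ((-r, a, ac) :: negL ℓ) = (r, a, ac) :: ℓ := by
      rw [negL_cons, negL_negL, neg_neg]
    rw [e1] at h3
    have e2 : ((sChi (-r) a ac).add g.neg).neg = (sChi r a ac).add g := by
      rw [neg_add, sChi_neg, neg_neg, neg_neg_mp]
    rw [e2] at h3
    exact h3

lemma isSum_sum (ℓ : List (ℚ × L × L))
    (hct : ∀ x ∈ ℓ, IsCompl x.2.1 x.2.2) (hd : ℓ.Pairwise DisjT) :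
    IsSum ℓ (sumMP (ℓ.map fun x => sChi x.1 x.2.1 x.2.2)) := by
  induction ℓ with
  | nil => exact isSum_zero
  | cons x t ih =>
    rw [List.pairwise_cons] at hd
    rcases t with _ | ⟨y, t'⟩
    · exact isSum_single (hct x (List.mem_cons_self))
    · have ihh := ih (fun z hz => hct z (List.mem_cons_of_mem _ hz)) hd.2
      exact isSum_add' (hct x (List.mem_cons_self))
        (fun z hz => hct z (List.mem_cons_of_mem _ hz))
        (fun z hz => hd.1 z hz) ihh

end SimpleAux

open SimpleAux in
/-- Positive and negative parts of a simple function in canonical form: if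
`f = Σ_{i=1}^{n} r_i·χ_{a_i}` with `r_1 < ⋯ < r_k < 0 ≤ r_{k+1} < ⋯ < r_n`, then
`f⁺ = f ⊔ 𝟎 = Σ_{i=k+1}^{n} r_i·χ_{a_i}` and `f⁻ = (−f) ⊔ 𝟎 = Σ_{i=1}^{k} (−r_i)·χ_{a_i}`;
in particular the positive and negative parts of a measurable simple function are simple. -/
theorem pos_neg_parts_of_simple {L : Type*} [Order.Frame L]
    (n k : ℕ) (hkn : k ≤ n)
    (r : Fin n → ℚ) (hr : StrictMono r)
    (hneg : ∀ i : Fin n, (i : ℕ) < k ↔ r i < 0)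
    (a ac : Fin n → L) (ha : ∀ i, IsCompl (a i) (ac i))
    (hdisj : ∀ i j, i ≠ j → a i ⊓ a j = ⊥) (hcov : (⨆ i, a i) = ⊤)
    (f : MP L) (hf : f = sumMP (List.ofFn fun i => sChi (r i) (a i) (ac i))) :
    f.sup (zeroMP L) =
      sumMP (List.ofFn fun j : Fin (n - k) =>
        sChi (r ⟨k + (j : ℕ), by have := j.isLt; omega⟩)
          (a ⟨k + (j : ℕ), by have := j.isLt; omega⟩)
          (ac ⟨k + (j : ℕ), by have := j.isLt; omega⟩)) ∧
    f.neg.sup (zeroMP L) =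
      sumMP (List.ofFn fun i : Fin k =>
        sChi (-(r ⟨(i : ℕ), by have := i.isLt; omega⟩))
          (a ⟨(i : ℕ), by have := i.isLt; omega⟩)
          (ac ⟨(i : ℕ), by have := i.isLt; omega⟩)) := by
  classical
  set T : Fin n → ℚ × L × L := fun i => (r i, a i, ac i) with hT
  set tneg : List (ℚ × L × L) :=
    List.ofFn (fun i : Fin k => T ⟨i.1, by have := i.isLt; omega⟩) with htneg
  set tpos : List (ℚ × L × L) :=
    List.ofFn (fun j : Fin (n - k) => T ⟨k + j.1, by have := j.isLt; omega⟩) with htpos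
  -- splitting of the full list
  have hsplit : List.ofFn T = tneg ++ tpos := by
    rw [htneg, htpos]
    apply List.ext_getElem
    · simp; omega
    · intro i h1 h2
      simp only [List.getElem_ofFn, List.getElem_append, List.length_ofFn]
      split
      · rfl
      · congr 1
        apply Fin.ext
        simp only [List.length_ofFn] at h1 ⊢
        omega
  -- compl and pairwise facts
  have hctfull : ∀ x ∈ List.ofFn T, IsCompl x.2.1 x.2.2 := by
    intro x hx
    rcases (List.mem_ofFn).1 hx with ⟨i, rfl⟩
    exact ha i
  have hpairfull : (List.ofFn T).Pairwise DisjT :=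
    List.pairwise_ofFn.2 fun i j hij => hdisj i j (ne_of_lt hij)
  have hctneg : ∀ x ∈ tneg, IsCompl x.2.1 x.2.2 := by
    intro x hx
    rcases (List.mem_ofFn).1 hx with ⟨i, rfl⟩
    exact ha _
  have hctpos : ∀ x ∈ tpos, IsCompl x.2.1 x.2.2 := by
    intro x hx
    rcases (List.mem_ofFn).1 hx with ⟨i, rfl⟩
    exact ha _
  have hpairneg : tneg.Pairwise DisjT :=
    List.pairwise_ofFn.2 fun i j hij =>
      hdisj _ _ (Fin.ne_of_val_ne (by exact Nat.ne_of_lt hij))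
  have hpairpos : tpos.Pairwise DisjT :=
    List.pairwise_ofFn.2 fun i j hij =>
      hdisj _ _ (Fin.ne_of_val_ne (show k + (i : ℕ) ≠ k + (j : ℕ) by
        have hij' : (i : ℕ) < (j : ℕ) := hij
        omega))
  -- sign facts
  have hsneg : ∀ x ∈ tneg, x.1 < 0 := by
    intro x hx
    rcases (List.mem_ofFn).1 hx with ⟨i, rfl⟩
    exact (hneg _).1 i.isLt
  have hspos : ∀ x ∈ tpos, 0 ≤ x.1 := by
    intro x hx
    rcases (List.mem_ofFn).1 hx with ⟨j, rfl⟩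
    refine le_of_not_gt fun hlt => ?_
    have h2 : k + (j : ℕ) < k := (hneg _).2 hlt
    omega
  -- the three sum descriptions
  have hfull : IsSum (List.ofFn T) f := by
    have e : (List.ofFn T).map (fun x => sChi x.1 x.2.1 x.2.2) =
        List.ofFn (fun i => sChi (r i) (a i) (ac i)) := by
      rw [List.map_ofFn]; rfl
    rw [hf, ← e]
    exact isSum_sum _ hctfull hpairfull
  have hpos : IsSum tpos (sumMP (List.ofFn fun j : Fin (n - k) =>
      sChi (r ⟨k + (j : ℕ), by have := j.isLt; omega⟩)
        (a ⟨k + (j : ℕ), by have := j.isLt; omega⟩)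
        (ac ⟨k + (j : ℕ), by have := j.isLt; omega⟩))) := by
    have e : tpos.map (fun x => sChi x.1 x.2.1 x.2.2) =
        List.ofFn (fun j : Fin (n - k) =>
          sChi (r ⟨k + (j : ℕ), by have := j.isLt; omega⟩)
            (a ⟨k + (j : ℕ), by have := j.isLt; omega⟩)
            (ac ⟨k + (j : ℕ), by have := j.isLt; omega⟩)) := by
      rw [htpos, List.map_ofFn]; rfl
    rw [← e]
    exact isSum_sum _ hctpos hpairpos
  have hctnegm : ∀ x ∈ negL tneg, IsCompl x.2.1 x.2.2 := by
    intro x hx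
    rcases List.mem_map.1 hx with ⟨y, hy, rfl⟩
    exact hctneg y hy
  have hpairnegm : (negL tneg).Pairwise DisjT :=
    hpairneg.map _ fun x y hxy => hxy
  have hnegm : IsSum (negL tneg) (sumMP (List.ofFn fun i : Fin k =>
      sChi (-(r ⟨(i : ℕ), by have := i.isLt; omega⟩))
        (a ⟨(i : ℕ), by have := i.isLt; omega⟩)
        (ac ⟨(i : ℕ), by have := i.isLt; omega⟩))) := by
    have e : (negL tneg).map (fun x => sChi x.1 x.2.1 x.2.2) =
        List.ofFn (fun i : Fin k =>
          sChi (-(r ⟨(i : ℕ), by have := i.isLt; omega⟩))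
            (a ⟨(i : ℕ), by have := i.isLt; omega⟩)
            (ac ⟨(i : ℕ), by have := i.isLt; omega⟩)) := by
      rw [htneg, negL, List.map_ofFn, List.map_ofFn]; rfl
    rw [← e]
    exact isSum_sum _ hctnegm hpairnegm
  -- key complementation identities
  have key1 : selSup tneg (fun _ => True) ⊔ selInf (List.ofFn T) (fun _ => True) =
      selInf tpos (fun _ => True) := by
    have h0 := compl_identity (ℓ := List.ofFn T) (fun t => 0 ≤ t) hctfull hpairfull
    rw [hsplit] at h0
    simp only [selSup_append, selInf_append] at h0
    rw [selSup_congr (ℓ := tneg) (P := fun t => ¬ 0 ≤ t) (Q := fun _ => True)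
        (fun x hx => by simpa using not_le.2 (hsneg x hx)),
      selSup_bot (ℓ := tpos) (P := fun t => ¬ 0 ≤ t)
        (fun x hx => not_not_intro (hspos x hx)), sup_bot_eq,
      selInf_top (ℓ := tneg) (P := fun t => 0 ≤ t) (fun x hx => not_le.2 (hsneg x hx)),
      top_inf_eq,
      selInf_congr (ℓ := tpos) (P := fun t => 0 ≤ t) (Q := fun _ => True)
        (fun x hx => by simpa using hspos x hx)] at h0
    rw [hsplit, selInf_append]
    exact h0
  refine ⟨MP.ext' (fun p => ?_) (fun q => ?_), MP.ext' (fun p => ?_) (fun q => ?_)⟩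
  · -- positive part, u component
    show f.u p ⊔ (if p < 0 then ⊤ else ⊥) = _
    rw [hfull.hu p, hpos.hu p]
    by_cases hp : p < 0
    · rw [if_pos hp, if_pos hp, if_pos hp, sup_top_eq,
        selSup_congr (ℓ := tpos) (Q := fun _ => True)
          (fun x hx => by simpa using lt_of_lt_of_le hp (hspos x hx)),
        selSup_selInf_top hctpos hpairpos]
    · rw [if_neg hp, if_neg hp, if_neg hp, sup_bot_eq, sup_bot_eq, sup_bot_eq, hsplit,
        selSup_append,
        selSup_bot (ℓ := tneg) (P := fun t => p < t)
          (fun x hx => not_lt.2 (le_trans (le_of_lt (hsneg x hx)) (not_lt.1 hp))),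
        bot_sup_eq]
  · -- positive part, v component
    show f.v q ⊓ (if q ≤ 0 then ⊥ else ⊤) = _
    rw [hfull.hv q, hpos.hv q]
    by_cases hq : q ≤ 0
    · rw [if_pos hq, inf_bot_eq, if_neg (not_lt.2 hq), sup_bot_eq,
        selSup_bot (ℓ := tpos) (P := fun t => t < q)
          (fun x hx => not_lt.2 (le_trans hq (hspos x hx)))]
    · have hq' : 0 < q := not_le.1 hq
      rw [if_neg hq, inf_top_eq, if_pos hq', if_pos hq', hsplit, selSup_append,
        selSup_congr (ℓ := tneg) (P := fun t => t < q) (Q := fun _ => True)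
          (fun x hx => by simpa using lt_trans (hsneg x hx) hq'),
        ← hsplit, ← key1]
      ac_rfl
  · -- negative part, u component
    show f.v (-p) ⊔ (if p < 0 then ⊤ else ⊥) = _
    rw [hfull.hv (-p), hnegm.hu p, selSup_negL, selInf_negL]
    by_cases hp : p < 0
    · rw [if_pos hp, sup_top_eq, if_pos hp,
        selSup_congr (ℓ := tneg) (P := fun t => p < -t) (Q := fun _ => True)
          (fun x hx => by simpa using lt_trans hp (by linarith [hsneg x hx])),
        selInf_congr (ℓ := tneg) (P := fun t => True) (Q := fun _ => True) (fun x hx => Iff.rfl),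
        selSup_selInf_top hctneg hpairneg]
    · have hp' : (0:ℚ) ≤ p := not_lt.1 hp
      rw [if_neg hp, sup_bot_eq, if_neg hp, sup_bot_eq,
        if_neg (show ¬ (0:ℚ) < -p by intro hc'; linarith), sup_bot_eq, hsplit, selSup_append,
        selSup_bot (ℓ := tpos) (P := fun t => t < -p)
          (fun x hx => not_lt.2 (by linarith [hspos x hx])),
        sup_bot_eq]
      exact selSup_congr fun x hx => by constructor <;> intro <;> linarith
  · -- negative part, v component
    show f.u (-q) ⊓ (if q ≤ 0 then ⊥ else ⊤) = _
    rw [hfull.hu (-q), hnegm.hv q, selSup_negL, selInf_negL]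
    by_cases hq : q ≤ 0
    · rw [if_pos hq, inf_bot_eq, if_neg (not_lt.2 hq), sup_bot_eq,
        selSup_bot (ℓ := tneg) (P := fun t => -t < q)
          (fun x hx => show ¬ (-x.1 < q) by intro hc'; linarith [hsneg x hx])]
    · have hq' : 0 < q := not_le.1 hq
      rw [if_neg hq, inf_top_eq, if_pos (show -q < 0 by linarith), if_pos hq']
      have key2 := compl_identity (ℓ := List.ofFn T) (fun t => t ≤ -q) hctfull hpairfull
      have key3 := compl_identity (ℓ := tneg) (fun t => t ≤ -q) hctneg hpairneg
      rw [selSup_congr (ℓ := List.ofFn T) (P := fun t => ¬ t ≤ -q) (Q := fun t => -q < t)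
          (fun x hx => not_le)] at key2
      rw [selSup_congr (ℓ := tneg) (P := fun t => ¬ t ≤ -q) (Q := fun t => -q < t)
          (fun x hx => not_le)] at key3
      rw [key2, hsplit, selInf_append,
        selInf_top (ℓ := tpos) (P := fun t => t ≤ -q)
          (fun x hx => not_le.2 (by linarith [hspos x hx])),
        inf_top_eq, ← key3]
      congr 1
      exact selSup_congr fun x hx => by constructor <;> intro <;> linarith
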